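/- Let m ≥ 1, let F : ℝ^m → ℝ be C³ and homogeneous of degree 6, and set f = ∇F. Let Q : [0, ∞) → ℝ^m be continuous on [0, ∞), C² on (0, ∞), not constant, satisfying Q''(r) + (2/r) Q'(r) + f(Q(r)) = 0 on (0, ∞) and lim_{r→0+} Q'(r) = 0. Suppose there exist θ ∈ ℝ^m, C > 0 and R > 0 such that |Q(r) − θ/r| ≤ C r^{−3} and |Q'(r) + θ/r²| ≤ C r^{−4} for all r ≥ R. Then θ ≠ 0 and F(θ) > 0. -/

import Mathlib

open Set Filter

section aux
open InnerProductSpace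

variable {E : Type*} [NormedAddCommGroup E] [InnerProductSpace ℝ E] [CompleteSpace E]

lemma grad_hom (F : E → ℝ) (hF : Differentiable ℝ F)
    (hhom : ∀ c : ℝ, 0 ≤ c → ∀ x, F (c • x) = c ^ 6 * F x)
    {c : ℝ} (hc : 0 < c) (x : E) :
    gradient F (c • x) = c ^ 5 • gradient F x := by
  have h1 : HasFDerivAt (fun y => F (c • y))
      ((fderiv ℝ F (c • x)).comp (c • ContinuousLinearMap.id ℝ E)) x := by
    have hl : HasFDerivAt (fun y : E => c • y) (c • ContinuousLinearMap.id ℝ E) x := by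
      exact (c • ContinuousLinearMap.id ℝ E).hasFDerivAt (x := x)
    exact (hF.differentiableAt.hasFDerivAt (x := c • x)).comp x hl
  have h2 : HasFDerivAt (fun y => F (c • y)) (c ^ 6 • fderiv ℝ F x) x := by
    have := (hF.differentiableAt.hasFDerivAt (x := x)).const_smul (c ^ 6)
    refine this.congr_of_eventuallyEq ?_
    filter_upwards with y using (hhom c hc.le y).trans rfl
  have heq := h1.unique h2
  have hkey : fderiv ℝ F (c • x) = c ^ 5 • fderiv ℝ F x := by
    ext y
    have h := congrFun (congrArg DFunLike.coe heq) y
    simp only [ContinuousLinearMap.coe_comp', Function.comp_apply,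
      ContinuousLinearMap.smul_apply, ContinuousLinearMap.coe_id', id_eq] at h ⊢
    have h' : fderiv ℝ F (c • x) (c • y) = c ^ 6 * fderiv ℝ F x y := h
    rw [map_smul] at h'
    have hc' : c ≠ 0 := hc.ne'
    simp only [smul_eq_mul] at h' ⊢
    field_simp at h' ⊢
    nlinarith [h']
  show (toDual ℝ E).symm (fderiv ℝ F (c • x)) = c ^ 5 • (toDual ℝ E).symm (fderiv ℝ F x)
  rw [hkey, map_smul]

lemma W_deriv (F : E → ℝ) (hF : ContDiff ℝ 3 F)
    (hgrad : ∀ c : ℝ, 0 < c → ∀ x, gradient F (c • x) = c ^ 5 • gradient F x)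
    (Q Q' Q'' : ℝ → E)
    (hQd : ∀ r : ℝ, 0 < r → HasDerivAt Q (Q' r) r)
    (hQd' : ∀ r : ℝ, 0 < r → HasDerivAt Q' (Q'' r) r)
    (hode : ∀ r : ℝ, 0 < r → Q'' r + (2 / r) • Q' r + gradient F (Q r) = 0)
    (s : ℝ) (hs : 0 < s) :
    HasDerivAt (fun s => (1/2) * (inner ℝ (s^2 • Q s + s^3 • Q' s) (s^2 • Q s + s^3 • Q' s) : ℝ)
        + F (s • Q s))
      ((2/s) * (inner ℝ (s^2 • Q s + s^3 • Q' s) (s^2 • Q s + s^3 • Q' s) : ℝ)) s := by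
  have hFd : Differentiable ℝ F := hF.differentiable (by norm_num)
  set u : ℝ → E := fun s => s^2 • Q s + s^3 • Q' s with hu_def
  have hu : HasDerivAt u ((2*s) • Q s + (4*s^2) • Q' s + s^3 • Q'' s) s := by
    have h1 := (hasDerivAt_pow 2 s).smul (hQd s hs)
    have h2 := (hasDerivAt_pow 3 s).smul (hQd' s hs)
    have h3 := h1.add h2
    refine HasDerivAt.congr_deriv (f := u) h3 ?_
    module
  have hγ : HasDerivAt (fun t : ℝ => t • Q t) (Q s + s • Q' s) s := by
    have h := (hasDerivAt_id s).smul (hQd s hs)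
    simp only [id_eq, one_smul] at h
    refine HasDerivAt.congr_deriv (f := fun t : ℝ => t • Q t) h ?_
    module
  have hFγ : HasDerivAt (fun t : ℝ => F (t • Q t))
      ((inner ℝ (gradient F (s • Q s)) (Q s + s • Q' s) : ℝ)) s := by
    have hfd : HasFDerivAt F (toDual ℝ E (gradient F (s • Q s))) (s • Q s) :=
      (hFd.differentiableAt.hasGradientAt).hasFDerivAt
    have := hfd.comp_hasDerivAt s hγ
    exact this
  have hinner := (hu.inner ℝ hu).const_mul (1/2)
  have hW := hinner.add hFγ
  refine HasDerivAt.congr_deriv hW ?_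
  have hQ'' : Q'' s = -((2/s) • Q' s) - gradient F (Q s) := by
    have h := hode s hs
    have h' : Q'' s + ((2/s) • Q' s + gradient F (Q s)) = 0 := by rw [← add_assoc]; exact h
    rw [add_eq_zero_iff_eq_neg] at h'
    rw [h']; module
  rw [hgrad s hs (Q s), hQ'']
  simp only [hu_def, inner_add_left, inner_add_right, inner_smul_left, inner_smul_right,
    inner_neg_left, inner_neg_right, inner_sub_left, inner_sub_right, smul_neg, neg_smul,
    RCLike.conj_to_real, real_inner_comm (Q' s) (Q s),
    real_inner_comm (gradient F (Q s)) (Q s), real_inner_comm (gradient F (Q s)) (Q' s)]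
  field_simp
  ring

end aux

/-- Second assertion of Proposition 3.11: the asymptotic profile `θ` of a nontrivial
radial stationary solution satisfies `θ ≠ 0` and `F(θ) > 0`. -/
theorem stmt8 (m : ℕ) (hm : 1 ≤ m)
    (F : EuclideanSpace ℝ (Fin m) → ℝ) (hF : ContDiff ℝ 3 F)
    (hhom : ∀ c : ℝ, 0 ≤ c → ∀ x, F (c • x) = c ^ 6 * F x)
    (Q Q' Q'' : ℝ → EuclideanSpace ℝ (Fin m))
    (hQc : ContinuousOn Q (Ici 0))
    (hQd : ∀ r : ℝ, 0 < r → HasDerivAt Q (Q' r) r)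
    (hQd' : ∀ r : ℝ, 0 < r → HasDerivAt Q' (Q'' r) r)
    (hQ'' : ContinuousOn Q'' (Ioi 0))
    (hnc : ¬ ∃ c, ∀ r : ℝ, 0 ≤ r → Q r = c)
    (hode : ∀ r : ℝ, 0 < r → Q'' r + (2 / r) • Q' r + gradient F (Q r) = 0)
    (hQ'0 : Tendsto Q' (nhdsWithin 0 (Ioi 0)) (nhds 0))
    (θ : EuclideanSpace ℝ (Fin m)) (C R : ℝ) (hC : 0 < C) (hR : 0 < R)
    (hasym : ∀ r : ℝ, R ≤ r → ‖Q r - r⁻¹ • θ‖ ≤ C / r ^ 3)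
    (hasym' : ∀ r : ℝ, R ≤ r → ‖Q' r + (r ^ 2)⁻¹ • θ‖ ≤ C / r ^ 4) :
    θ ≠ 0 ∧ 0 < F θ := by
  have hFd : Differentiable ℝ F := hF.differentiable (by norm_num)
  have hF0 : F 0 = 0 := by
    have h := hhom 0 le_rfl 0
    simpa using h
  have hgrad : ∀ c : ℝ, 0 < c → ∀ x, gradient F (c • x) = c ^ 5 • gradient F x :=
    fun c hc x => grad_hom F hFd hhom hc x
  set u : ℝ → EuclideanSpace ℝ (Fin m) := fun s => s^2 • Q s + s^3 • Q' s with hu_def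
  set W : ℝ → ℝ := fun s => (1/2) * (inner ℝ (u s) (u s) : ℝ) + F (s • Q s) with hW_def
  have hWd : ∀ s : ℝ, 0 < s → HasDerivAt W ((2/s) * (inner ℝ (u s) (u s) : ℝ)) s :=
    fun s hs => W_deriv F hF hgrad Q Q' Q'' hQd hQd' hode s hs
  -- monotone
  have hmono : MonotoneOn W (Ioi 0) := by
    apply monotoneOn_of_deriv_nonneg (convex_Ioi 0)
    · exact fun s hs => ((hWd s hs).continuousAt.continuousWithinAt)
    · intro s hs
      rw [interior_Ioi] at hs
      exact (hWd s hs).differentiableAt.differentiableWithinAt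
    · intro s hs
      rw [interior_Ioi] at hs
      rw [(hWd s hs).deriv]
      have h1 : (0:ℝ) ≤ inner ℝ (u s) (u s) := real_inner_self_nonneg
      have hs' : (0:ℝ) < s := hs
      have h2 : (0:ℝ) ≤ 2/s := by positivity
      exact mul_nonneg h2 h1
  -- limit at 0+
  have hQ0 : Tendsto Q (nhdsWithin 0 (Ioi 0)) (nhds (Q 0)) :=
    ((hQc 0 self_mem_Ici).tendsto).mono_left (nhdsWithin_mono 0 Ioi_subset_Ici_self)
  have hpow2 : Tendsto (fun s : ℝ => s ^ 2) (nhdsWithin 0 (Ioi 0)) (nhds 0) := by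
    have := ((continuous_pow 2).tendsto (0:ℝ)).mono_left (nhdsWithin_le_nhds (s := Ioi (0:ℝ)))
    simpa using this
  have hpow3 : Tendsto (fun s : ℝ => s ^ 3) (nhdsWithin 0 (Ioi 0)) (nhds 0) := by
    have := ((continuous_pow 3).tendsto (0:ℝ)).mono_left (nhdsWithin_le_nhds (s := Ioi (0:ℝ)))
    simpa using this
  have hid0 : Tendsto (fun s : ℝ => s) (nhdsWithin 0 (Ioi 0)) (nhds 0) := by
    exact tendsto_id.mono_left nhdsWithin_le_nhds
  have hu0 : Tendsto u (nhdsWithin 0 (Ioi 0)) (nhds 0) := by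
    have h1 := hpow2.smul hQ0
    have h2 := hpow3.smul hQ'0
    have := h1.add h2
    simpa using this
  have hsQ0 : Tendsto (fun s : ℝ => s • Q s) (nhdsWithin 0 (Ioi 0)) (nhds 0) := by
    have := hid0.smul hQ0
    simpa using this
  have hW0 : Tendsto W (nhdsWithin 0 (Ioi 0)) (nhds 0) := by
    have h1 := ((hu0.inner hu0).const_mul (1/2:ℝ)).add ((hF.continuous.tendsto 0).comp hsQ0)
    simpa only [inner_zero_left, mul_zero, hF0, add_zero, Function.comp_def] using h1
  -- limits at infinity
  have htail : ∀ᶠ s : ℝ in atTop, max R 1 ≤ s := eventually_ge_atTop (max R 1)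
  have hsQinf : Tendsto (fun s : ℝ => s • Q s) atTop (nhds θ) := by
    rw [tendsto_iff_norm_sub_tendsto_zero]
    apply squeeze_zero' (g := fun s => C / s ^ 2)
    · filter_upwards with s using norm_nonneg _
    · filter_upwards [htail] with s hsR
      have hs0 : (0:ℝ) < s := lt_of_lt_of_le one_pos (le_trans (le_max_right R 1) hsR)
      have heq : s • Q s - θ = s • (Q s - s⁻¹ • θ) := by
        rw [smul_sub, smul_inv_smul₀ hs0.ne']
      rw [heq, norm_smul, Real.norm_eq_abs, abs_of_pos hs0]
      have hb := hasym s (le_trans (le_max_left R 1) hsR)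
      calc s * ‖Q s - s⁻¹ • θ‖ ≤ s * (C / s ^ 3) := by
            exact mul_le_mul_of_nonneg_left hb hs0.le
        _ = C / s ^ 2 := by field_simp
    · exact Tendsto.div_atTop tendsto_const_nhds (tendsto_pow_atTop two_ne_zero)
  have huinf : Tendsto u atTop (nhds 0) := by
    rw [tendsto_zero_iff_norm_tendsto_zero]
    apply squeeze_zero' (g := fun s => 2 * C / s)
    · filter_upwards with s using norm_nonneg _
    · filter_upwards [htail] with s hsR
      have hs0 : (0:ℝ) < s := lt_of_lt_of_le one_pos (le_trans (le_max_right R 1) hsR)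
      have heq : u s = s ^ 2 • (Q s - s⁻¹ • θ) + s ^ 3 • (Q' s + (s ^ 2)⁻¹ • θ) := by
        have e1 : s ^ 2 • (s⁻¹ • θ) = s • θ := by
          rw [smul_smul]
          congr 1
          field_simp
        have e2 : s ^ 3 • ((s ^ 2)⁻¹ • θ) = s • θ := by
          rw [smul_smul]
          congr 1
          field_simp
        simp only [hu_def, smul_sub, smul_add, e1, e2]
        module
      rw [heq]
      have hb1 := hasym s (le_trans (le_max_left R 1) hsR)
      have hb2 := hasym' s (le_trans (le_max_left R 1) hsR)
      calc ‖s ^ 2 • (Q s - s⁻¹ • θ) + s ^ 3 • (Q' s + (s ^ 2)⁻¹ • θ)‖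
          ≤ ‖s ^ 2 • (Q s - s⁻¹ • θ)‖ + ‖s ^ 3 • (Q' s + (s ^ 2)⁻¹ • θ)‖ := norm_add_le _ _
        _ = s ^ 2 * ‖Q s - s⁻¹ • θ‖ + s ^ 3 * ‖Q' s + (s ^ 2)⁻¹ • θ‖ := by
            rw [norm_smul, norm_smul, Real.norm_eq_abs, Real.norm_eq_abs,
              abs_of_pos (pow_pos hs0 2), abs_of_pos (pow_pos hs0 3)]
        _ ≤ s ^ 2 * (C / s ^ 3) + s ^ 3 * (C / s ^ 4) := by
            have := pow_pos hs0 2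
            have := pow_pos hs0 3
            gcongr
        _ = 2 * C / s := by field_simp; ring
    · exact Tendsto.div_atTop tendsto_const_nhds tendsto_id
  have hWinf : Tendsto W atTop (nhds (F θ)) := by
    have h1 := ((huinf.inner huinf).const_mul (1/2:ℝ)).add
      ((hF.continuous.tendsto θ).comp hsQinf)
    simpa only [inner_zero_left, mul_zero, zero_add, Function.comp_def] using h1
  -- W s between 0 and F θ
  have hWge : ∀ s : ℝ, 0 < s → 0 ≤ W s := by
    intro s hs
    refine le_of_tendsto hW0 ?_
    filter_upwards [mem_nhdsWithin_of_mem_nhds (Iio_mem_nhds hs), self_mem_nhdsWithin]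
      with t ht1 ht2
    exact hmono ht2 hs (le_of_lt ht1)
  have hWle : ∀ s : ℝ, 0 < s → W s ≤ F θ := by
    intro s hs
    refine ge_of_tendsto hWinf ?_
    filter_upwards [eventually_ge_atTop (max s 1)] with t ht
    have hts : s ≤ t := le_trans (le_max_left s 1) ht
    have ht0 : (0:ℝ) < t := lt_of_lt_of_le one_pos (le_trans (le_max_right s 1) ht)
    exact hmono hs ht0 hts
  have hFθ : 0 ≤ F θ := le_trans (hWge 1 one_pos) (hWle 1 one_pos)
  -- strict positivity
  have hpos : 0 < F θ := by
    rcases lt_or_eq_of_le hFθ with h | h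
    · exact h
    exfalso
    -- then W ≡ 0 on (0,∞)
    have hWzero : ∀ s : ℝ, 0 < s → W s = 0 := by
      intro s hs
      have := hWle s hs
      rw [← h] at this
      exact le_antisymm this (hWge s hs)
    have huzero : ∀ s : ℝ, 0 < s → u s = 0 := by
      intro s hs
      have hconst : HasDerivAt W 0 s := by
        refine (hasDerivAt_const s (0:ℝ)).congr_of_eventuallyEq ?_
        filter_upwards [Ioi_mem_nhds hs] with t ht using hWzero t ht
      have := (hWd s hs).unique hconst
      have h2s : (2:ℝ)/s ≠ 0 := div_ne_zero two_ne_zero hs.ne'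
      have hin : (inner ℝ (u s) (u s) : ℝ) = 0 := by
        rcases mul_eq_zero.mp this with h' | h'
        · exact absurd h' h2s
        · exact h'
      exact inner_self_eq_zero.mp hin
    have hsum : ∀ s : ℝ, 0 < s → Q s + s • Q' s = 0 := by
      intro s hs
      have h1 : u s = s ^ 2 • (Q s + s • Q' s) := by
        simp only [hu_def, smul_add, smul_smul]
        norm_num
        module
      have h2 := huzero s hs
      rw [h1] at h2
      rcases smul_eq_zero.mp h2 with h3 | h3
      · exact absurd h3 (pow_ne_zero 2 hs.ne')
      · exact h3
    -- g(s) = s • Q s is locally constant on (0,∞), hence vanishes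
    have hgd : ∀ s : ℝ, 0 < s → HasDerivAt (fun t : ℝ => t • Q t) 0 s := by
      intro s hs
      have hg := (hasDerivAt_id s).smul (hQd s hs)
      simp only [id_eq, one_smul] at hg
      have : s • Q' s + Q s = 0 := by
        rw [add_comm]; exact hsum s hs
      rwa [this] at hg
    have hgconst : ∀ a b : ℝ, 0 < a → a ≤ b → b • Q b = a • Q a := by
      intro a b ha hab
      have hcont : ContinuousOn (fun t : ℝ => t • Q t) (Icc a b) := by
        intro t ht
        exact ((hgd t (lt_of_lt_of_le ha ht.1)).continuousAt).continuousWithinAt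
      have hderiv : ∀ t ∈ Ico a b, HasDerivWithinAt (fun t : ℝ => t • Q t) 0 (Ici t) t := by
        intro t ht
        exact (hgd t (lt_of_lt_of_le ha ht.1)).hasDerivWithinAt
      exact constant_of_has_deriv_right_zero hcont hderiv b ⟨hab, le_refl b⟩
    have hQzero : ∀ s : ℝ, 0 < s → Q s = 0 := by
      intro s hs
      have hev : ∀ᶠ t in nhdsWithin 0 (Ioi 0), t • Q t = s • Q s := by
        filter_upwards [mem_nhdsWithin_of_mem_nhds (Iio_mem_nhds hs), self_mem_nhdsWithin]
          with t ht1 ht2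
        exact (hgconst t s ht2 (le_of_lt ht1)).symm
      have hlim : Tendsto (fun t : ℝ => t • Q t) (nhdsWithin 0 (Ioi 0)) (nhds (s • Q s)) :=
        Tendsto.congr' (EventuallyEq.symm hev) tendsto_const_nhds
      have h0 : s • Q s = 0 := tendsto_nhds_unique hlim hsQ0
      rcases smul_eq_zero.mp h0 with h3 | h3
      · exact absurd h3 hs.ne'
      · exact h3
    have hQ00 : Q 0 = 0 := by
      have hlim : Tendsto Q (nhdsWithin 0 (Ioi 0)) (nhds 0) := by
        refine Tendsto.congr' ?_ tendsto_const_nhds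
        filter_upwards [self_mem_nhdsWithin] with t ht
        exact (hQzero t ht).symm
      exact tendsto_nhds_unique hQ0 hlim
    exact hnc ⟨0, fun r hr => by
      rcases eq_or_lt_of_le hr with h' | h'
      · rw [← h']; exact hQ00
      · exact hQzero r h'⟩
  refine ⟨?_, hpos⟩
  intro hθ
  rw [hθ, hF0] at hpos
  exact lt_irrefl 0 hpos
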